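/- arXiv:2310.09301 — 3 statements merged into one kernel-verified Lean document; each statement's English description precedes it below -/
import Mathlib

section
/- Let γ be a simple closed plane curve. If there exist two disjoint open disks of radius 1 both contained in the inside (the bounded complementary component) of γ, then the diameter of γ is at least 4. -/
/-!
A simple closed plane curve here is an injective (per period), continuous, periodic map
`ℝ → ℝ²`.  Its inside is the union of the bounded connected components of the complement
of its image (by the Jordan curve theorem there is exactly one).
-/

open Metric Set

noncomputable section

/-- The Euclidean plane. -/
abbrev Plane := EuclideanSpace ℝ (Fin 2)

/-- A simple closed plane curve: an injective (per period), continuous, periodic map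
`ℝ → ℝ²`. -/
structure SimpleClosedCurve where
  toFun : ℝ → Plane
  period : ℝ
  period_pos : 0 < period
  periodic : Function.Periodic toFun period
  injOn : Set.InjOn toFun (Set.Ico 0 period)
  continuous : Continuous toFun

namespace SimpleClosedCurve

/-- The image (trace) of the curve. -/
def image (c : SimpleClosedCurve) : Set Plane := Set.range c.toFun

/-- The inside of the curve: the union of the bounded connected components of the
complement of the image. -/
def inside (c : SimpleClosedCurve) : Set Plane :=
  {x | x ∉ c.image ∧ Bornology.IsBounded (connectedComponentIn c.imageᶜ x)}

end SimpleClosedCurve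


private theorem aux_not_bounded (s : Set Plane) (z : Plane)
    (hz : z ∉ closure (convexHull ℝ s)) (hne : s.Nonempty)
    (hb : Bornology.IsBounded (connectedComponentIn sᶜ z)) : False := by
  obtain ⟨f, u, hfa, hfz⟩ := geometric_hahn_banach_closed_point
    ((convex_convexHull ℝ s).closure) isClosed_closure hz
  obtain ⟨a, ha⟩ := hne
  have hfa' : f a < u := hfa a (subset_closure (subset_convexHull ℝ s ha))
  have hfv : 0 < f (z - a) := by simp only [map_sub]; linarith
  set w := (f (z - a))⁻¹ • (z - a) with hw
  have hfw : f w = 1 := by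
    simp only [hw, map_smul, smul_eq_mul]
    exact inv_mul_cancel₀ hfv.ne'
  have hwne : (0:ℝ) < ‖w‖ := by
    rcases eq_or_ne w 0 with h | h
    · simp [h] at hfw
    · exact norm_pos_iff.2 h
  set H : Set Plane := {p | u < f p} with hH
  have hHconv : Convex ℝ H := (convex_Ioi u).linear_preimage (f : Plane →ₗ[ℝ] ℝ)
  have hHsub : H ⊆ sᶜ := fun p hp hps =>
    absurd (hfa p (subset_closure (subset_convexHull ℝ s hps))) (not_lt.2 hp.le)
  have hHcc : H ⊆ connectedComponentIn sᶜ z :=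
    hHconv.isPreconnected.subset_connectedComponentIn hfz hHsub
  obtain ⟨C, hC⟩ := (hb.subset hHcc).exists_norm_le
  set t := (C + ‖z‖ + 1) / ‖w‖ with htdef
  have hCz : ‖z‖ ≤ C := hC z hfz
  have ht : 0 ≤ t := div_nonneg (by linarith [norm_nonneg z]) hwne.le
  have hp : z + t • w ∈ H := by
    have : f (z + t • w) = f z + t := by simp [map_add, map_smul, hfw]
    simp only [hH, mem_setOf_eq, this]
    nlinarith
  have := hC _ hp
  have h1 : ‖t • w‖ ≤ ‖z + t • w‖ + ‖z‖ := by
    calc ‖t • w‖ = ‖(z + t • w) - z‖ := by rw [add_sub_cancel_left]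
    _ ≤ ‖z + t • w‖ + ‖z‖ := norm_sub_le _ _
  have h2 : ‖t • w‖ = C + ‖z‖ + 1 := by
    rw [norm_smul, Real.norm_of_nonneg ht, htdef]
    field_simp
  linarith

/-- If the inside of a simple closed plane curve contains two disjoint
open disks of radius `1`, then the diameter of the curve is at least `4`. -/
theorem diam_ge_four_of_two_disjoint_unit_disks_inside
    (c : SimpleClosedCurve)
    (h : ∃ x y : Plane, Disjoint (Metric.ball x 1) (Metric.ball y 1) ∧
      Metric.ball x 1 ⊆ c.inside ∧ Metric.ball y 1 ⊆ c.inside) :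
    4 ≤ Metric.diam c.image := by
  obtain ⟨x, y, hdisj, hx, hy⟩ := h
  have hne : c.image.Nonempty := ⟨c.toFun 0, Set.mem_range_self 0⟩
  have himg_cpt : IsCompact c.image := by
    have : c.toFun '' Icc 0 (0 + c.period) = Set.range c.toFun :=
      c.periodic.image_Icc c.period_pos 0
    rw [SimpleClosedCurve.image, ← this]
    exact (isCompact_Icc.image c.continuous)
  set K := closure (convexHull ℝ c.image) with hK
  have hinsK : c.inside ⊆ K := by
    intro z hz
    by_contra hzK
    exact aux_not_bounded c.image z hzK hne hz.2
  have hKsub : ∀ p : Plane, ∀ r : Plane, ball r 1 ⊆ c.inside →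
      dist p r ≤ 1 → p ∈ K := by
    intro p r hr hpr
    have h1 : closedBall r 1 = closure (ball r 1) := (closure_ball r one_ne_zero).symm
    have h2 : closure (ball r 1) ⊆ K :=
      closure_minimal (hr.trans hinsK) isClosed_closure
    exact h2 (h1 ▸ mem_closedBall.2 hpr)
  -- the two centers are at distance at least 2
  have hd2 : 2 ≤ dist x y := by
    by_contra hlt
    push_neg at hlt
    have hm1 : midpoint ℝ x y ∈ ball x 1 := by
      rw [mem_ball, dist_midpoint_left]
      simp only [Real.norm_ofNat]
      linarith
    have hm2 : midpoint ℝ x y ∈ ball y 1 := by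
      rw [mem_ball, dist_midpoint_right]
      simp only [Real.norm_ofNat]
      linarith
    exact hdisj.ne_of_mem hm1 hm2 rfl
  set d := dist x y with hdd
  have hd0 : 0 < d := by linarith
  have hxy : ‖x - y‖ = d := by rw [hdd, dist_eq_norm]
  set uv := d⁻¹ • (x - y) with huv
  have hu1 : ‖uv‖ = 1 := by
    rw [huv, norm_smul, hxy, Real.norm_of_nonneg (by positivity)]
    field_simp
  set p := x + uv with hp
  set q := y - uv with hq
  have hpK : p ∈ K := hKsub p x hx (by
    rw [hp, dist_eq_norm, add_sub_cancel_left, hu1])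
  have hqK : q ∈ K := hKsub q y hy (by
    rw [hq, dist_eq_norm, sub_sub_cancel_left, norm_neg, hu1])
  have hdist : 4 ≤ dist p q := by
    have heq : p - q = (1 + 2/d) • (x - y) := by
      rw [hp, hq, huv]
      have h2 : (2:ℝ)/d = 2 * d⁻¹ := by ring
      rw [h2]
      module
    rw [dist_eq_norm, heq, norm_smul, hxy, Real.norm_of_nonneg (by positivity)]
    rw [add_mul, div_mul_cancel₀ _ hd0.ne', one_mul]
    linarith
  have hKb : Bornology.IsBounded K :=
    (isBounded_convexHull.2 himg_cpt.isBounded).closure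
  calc (4:ℝ) ≤ dist p q := hdist
    _ ≤ Metric.diam K := Metric.dist_le_diam_of_mem hKb hpK hqK
    _ = Metric.diam (convexHull ℝ c.image) := Metric.diam_closure _
    _ = Metric.diam c.image := convexHull_diam _
end
end

section
/- Let γ be a simple closed plane curve of class C², let p and q be two distinct points on γ, and suppose the incircle C_p of γ at p also passes through q. If the radius of C_p is strictly less than the radius of curvature 1/|γ''| of γ at every point of an arc γ₁ of γ between p and q, then the arc γ₁ contains points lying outside the closed disk bounded by C_p. -/
/-!
Common definitions: a simple closed plane curve of class C², arclength-parametrized;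
its inside (the bounded complementary component), the closed region it bounds,
incircles, osculating circles, and supporting from inside.
-/

open Metric Set

noncomputable section

/-- A simple closed plane curve of class C²: an injective (per period), arclength-parametrized,
C², periodic map `ℝ → ℝ²`. -/
structure SimpleClosedCurveC2 where
  toFun : ℝ → Plane
  period : ℝ
  period_pos : 0 < period
  periodic : Function.Periodic toFun period
  injOn : Set.InjOn toFun (Set.Ico 0 period)
  contDiff : ContDiff ℝ 2 toFun
  unitSpeed : ∀ s : ℝ, ‖deriv toFun s‖ = 1

namespace SimpleClosedCurveC2

/-- The image (trace) of the curve. -/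
def image (c : SimpleClosedCurveC2) : Set Plane := Set.range c.toFun

/-- The inside of the curve: the union of the bounded connected components of the
complement of the image (by the Jordan curve theorem there is exactly one). -/
def inside (c : SimpleClosedCurveC2) : Set Plane :=
  {x | x ∉ c.image ∧ Bornology.IsBounded (connectedComponentIn c.imageᶜ x)}

/-- The closed region bounded by the curve: the image together with the inside. -/
def region (c : SimpleClosedCurveC2) : Set Plane := c.image ∪ c.inside

/-- `IsIncircleAt c p center r` means the circle of center `center` and radius `r`
is the incircle of `c` at the point `p`: it passes through `p`, the closed disk it bounds
lies in the closed region bounded by the curve, and its radius is maximal among all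
such circles through `p`. -/
def IsIncircleAt (c : SimpleClosedCurveC2) (p center : Plane) (r : ℝ) : Prop :=
  0 < r ∧ p ∈ Metric.sphere center r ∧ Metric.closedBall center r ⊆ c.region ∧
    ∀ (center' : Plane) (r' : ℝ), p ∈ Metric.sphere center' r' →
      Metric.closedBall center' r' ⊆ c.region → r' ≤ r

/-- Center of the osculating circle at parameter `s` (meaningful when `γ'' s ≠ 0`). -/
def oscCenter (c : SimpleClosedCurveC2) (s : ℝ) : Plane :=
  c.toFun s + (‖deriv (deriv c.toFun) s‖ ^ 2)⁻¹ • deriv (deriv c.toFun) s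

/-- Radius of the osculating circle at parameter `s` (meaningful when `γ'' s ≠ 0`). -/
def oscRadius (c : SimpleClosedCurveC2) (s : ℝ) : ℝ :=
  ‖deriv (deriv c.toFun) s‖⁻¹

/-- The circle with center `center` and radius `r` supports `c` from inside at the
point `q`: the closed disk it bounds is contained in the closed region bounded by the
curve, and the circle meets the curve at `q`. -/
def SupportsFromInside (c : SimpleClosedCurveC2) (center : Plane) (r : ℝ) (q : Plane) : Prop :=
  Metric.closedBall center r ⊆ c.region ∧ q ∈ Metric.sphere center r ∧ q ∈ c.image

end SimpleClosedCurveC2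

set_option maxHeartbeats 1000000

open RealInnerProductSpace

def rotp (v : Plane) : Plane := WithLp.toLp 2 ![-(v 1), v 0]

lemma inner_two (x y : Plane) : ⟪x, y⟫ = x 0 * y 0 + x 1 * y 1 := by
  simp [PiLp.inner_apply, Fin.sum_univ_two, RCLike.inner_apply, mul_comm]

lemma inner_rotp (v : Plane) : ⟪v, rotp v⟫ = 0 := by
  simp [inner_two, rotp]; ring

lemma norm_rotp (v : Plane) : ‖rotp v‖ = ‖v‖ := by
  have h1 : ⟪rotp v, rotp v⟫ = ⟪v, v⟫ := by rw [inner_two, inner_two]; simp only [rotp, PiLp.toLp_apply, Matrix.cons_val_zero, Matrix.cons_val_one]; ring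
  have h2 := real_inner_self_eq_norm_sq (rotp v)
  have h3 := real_inner_self_eq_norm_sq v
  nlinarith [norm_nonneg (rotp v), norm_nonneg v]

lemma eq_inner_smul_rotp {v x : Plane} (hv : ‖v‖ = 1) (h1 : ⟪x, v⟫ = 0) :
    x = ⟪x, rotp v⟫ • rotp v := by
  have hv2 : v 0 * v 0 + v 1 * v 1 = 1 := by
    have := real_inner_self_eq_norm_sq v
    rw [inner_two] at this; nlinarith
  have h1' : x 0 * v 0 + x 1 * v 1 = 0 := by rw [inner_two] at h1; exact h1
  ext i
  have hs : ∀ (c : ℝ) (w : Plane) (j : Fin 2), (c • w) j = c * w j := fun c w j => rfl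
  fin_cases i <;> simp only [hs, inner_two, rotp] <;>
    simp [Matrix.cons_val_zero, Matrix.cons_val_one]
  · linear_combination (-(x 0)) * hv2 + v 0 * h1'
  · linear_combination (-(x 1)) * hv2 + v 1 * h1'

variable {γ : ℝ → Plane} {T : ℝ}

lemma eq_mod_period (hT : 0 < T) (hper : Function.Periodic γ T)
    (hinj : Set.InjOn γ (Set.Ico 0 T)) {s t : ℝ} (h : γ s = γ t) :
    ∃ k : ℤ, t - s = k * T := by
  have red : ∀ u : ℝ, γ (u - ⌊u / T⌋ * T) = γ u := fun u => hper.sub_int_mul_eq _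
  have hmem : ∀ u : ℝ, u - ⌊u / T⌋ * T ∈ Set.Ico 0 T := fun u =>
    ⟨Int.sub_floor_div_mul_nonneg u hT, Int.sub_floor_div_mul_lt u hT⟩
  have : γ (s - ⌊s / T⌋ * T) = γ (t - ⌊t / T⌋ * T) := by rw [red, red, h]
  have := hinj (hmem s) (hmem t) this
  exact ⟨⌊t / T⌋ - ⌊s / T⌋, by push_cast; linear_combination -this⟩

lemma curve_lip (hsm : ContDiff ℝ 2 γ) (hus : ∀ s, ‖deriv γ s‖ = 1) :
    LipschitzWith 1 γ := by
  apply lipschitzWith_of_nnnorm_deriv_le (hsm.differentiable (by norm_num))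
  intro x
  rw [← NNReal.coe_le_coe, coe_nnnorm, hus x, NNReal.coe_one]

lemma closure_window (hT : 0 < T) (hper : Function.Periodic γ T)
    (hinj : Set.InjOn γ (Set.Ico 0 T)) (hsm : ContDiff ℝ 2 γ)
    (hus : ∀ s, ‖deriv γ s‖ = 1) {z : Plane} {s₀ : ℝ}
    (hcl : γ s₀ ∈ closure (connectedComponentIn (Set.range γ)ᶜ z)) :
    ∃ σ > 0, ∀ s, |s - s₀| ≤ σ → γ s ∈ closure (connectedComponentIn (Set.range γ)ᶜ z) := by
  set U := connectedComponentIn (Set.range γ)ᶜ z with hU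
  set y : Plane := γ s₀ with hy
  set Tv : Plane := deriv γ s₀ with hTvdef
  set N : Plane := rotp Tv with hNdef
  have hTv1 : ‖Tv‖ = 1 := hus s₀
  have hN1 : ‖N‖ = 1 := by rw [hNdef, norm_rotp]; exact hTv1
  have hTN : ⟪Tv, N⟫ = 0 := inner_rotp Tv
  have hNT : ⟪N, Tv⟫ = 0 := by rw [real_inner_comm]; exact hTN
  have hdiff : Differentiable ℝ γ := hsm.differentiable (by norm_num)
  have hd1 : ∀ s, HasDerivAt γ (deriv γ s) s := fun s => (hdiff s).hasDerivAt
  have hlip : LipschitzWith 1 γ := curve_lip hsm hus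
  have hdist : ∀ s t : ℝ, dist (γ s) (γ t) ≤ |s - t| := by
    intro s t
    have := hlip.dist_le_mul s t
    rwa [NNReal.coe_one, one_mul, Real.dist_eq] at this
  set α : ℝ → ℝ := fun s => ⟪γ s - y, Tv⟫ with hαdef
  set β : ℝ → ℝ := fun s => ⟪γ s - y, N⟫ with hβdef
  have hdα : ∀ s, HasDerivAt α ⟪deriv γ s, Tv⟫ s := by
    intro s
    have h := HasDerivAt.inner ℝ ((hd1 s).sub_const y) (hasDerivAt_const s Tv)
    simpa only [inner_zero_right, zero_add] using h
  have hdβ : ∀ s, HasDerivAt β ⟪deriv γ s, N⟫ s := by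
    intro s
    have h := HasDerivAt.inner ℝ ((hd1 s).sub_const y) (hasDerivAt_const s N)
    simpa only [inner_zero_right, zero_add] using h
  have hα0 : α s₀ = 0 := by simp [hαdef, hy]
  have hcd : Continuous (deriv γ) := hsm.continuous_deriv (by norm_num)
  -- eventually bounds on the derivative components near s₀
  have e1 : ∀ᶠ s in nhds s₀, 3/4 < ⟪deriv γ s, Tv⟫ := by
    have h1 : Filter.Tendsto (fun s => ⟪deriv γ s, Tv⟫) (nhds s₀)
        (nhds ⟪deriv γ s₀, Tv⟫) := (hcd.inner continuous_const).tendsto s₀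
    have hval : ⟪deriv γ s₀, Tv⟫ = (1:ℝ) := by
      rw [← hTvdef, real_inner_self_eq_norm_sq, hTv1]; norm_num
    rw [hval] at h1
    exact h1.eventually (eventually_gt_nhds (by norm_num))
  have e2 : ∀ᶠ s in nhds s₀, |⟪deriv γ s, N⟫| < 1/4 := by
    have h1 : Filter.Tendsto (fun s => |⟪deriv γ s, N⟫|) (nhds s₀)
        (nhds |⟪deriv γ s₀, N⟫|) := ((hcd.inner continuous_const).abs).tendsto s₀
    have hval : |⟪deriv γ s₀, N⟫| = 0 := by rw [← hTvdef, hTN]; simp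
    rw [hval] at h1
    exact h1.eventually (eventually_lt_nhds (by norm_num))
  obtain ⟨ε, hε, hball⟩ := Metric.eventually_nhds_iff.mp (e1.and e2)
  set η : ℝ := min (ε/2) (T/4) with hηdef
  have hηpos : 0 < η := lt_min (by linarith) (by linarith)
  have hηT : η ≤ T/4 := min_le_right _ _
  have hbound : ∀ s : ℝ, |s - s₀| ≤ η → 3/4 < ⟪deriv γ s, Tv⟫ ∧ |⟪deriv γ s, N⟫| < 1/4 := by
    intro s hs
    exact hball (by rw [Real.dist_eq]; calc |s - s₀| ≤ η := hs
                                          _ < ε := lt_of_le_of_lt (min_le_left _ _) (by linarith))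
  set I : Set ℝ := Icc (s₀ - η) (s₀ + η) with hIdef
  have hIsub : ∀ s ∈ I, |s - s₀| ≤ η := by
    rintro s ⟨h1, h2⟩; rw [abs_le]; constructor <;> linarith
  have hαdiff : ∀ s, DifferentiableAt ℝ α s := fun s => (hdα s).differentiableAt
  have hβdiff : ∀ s, DifferentiableAt ℝ β s := fun s => (hdβ s).differentiableAt
  have hαcont : ContinuousOn α I := fun s _ => (hαdiff s).continuousAt.continuousWithinAt
  have hβcont : ContinuousOn β I := fun s _ => (hβdiff s).continuousAt.continuousWithinAt
  -- mean value bounds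
  have hαmono : ∀ s₁ ∈ I, ∀ s₂ ∈ I, s₁ ≤ s₂ → 3/4 * (s₂ - s₁) ≤ α s₂ - α s₁ := by
    apply (convex_Icc _ _).mul_sub_le_image_sub_of_le_deriv hαcont
      (fun s _ => (hαdiff s).differentiableWithinAt)
    intro s hs
    rw [(hdα s).deriv]
    rw [interior_Icc] at hs
    exact le_of_lt (hbound s (hIsub s (Ioo_subset_Icc_self hs))).1
  have hβub : ∀ s₁ ∈ I, ∀ s₂ ∈ I, s₁ ≤ s₂ → β s₂ - β s₁ ≤ 1/4 * (s₂ - s₁) := by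
    apply (convex_Icc _ _).image_sub_le_mul_sub_of_deriv_le hβcont
      (fun s _ => (hβdiff s).differentiableWithinAt)
    intro s hs
    rw [(hdβ s).deriv]
    rw [interior_Icc] at hs
    exact le_of_lt (lt_of_abs_lt (hbound s (hIsub s (Ioo_subset_Icc_self hs))).2)
  have hβlb : ∀ s₁ ∈ I, ∀ s₂ ∈ I, s₁ ≤ s₂ → -(1/4) * (s₂ - s₁) ≤ β s₂ - β s₁ := by
    apply (convex_Icc _ _).mul_sub_le_image_sub_of_le_deriv hβcont
      (fun s _ => (hβdiff s).differentiableWithinAt)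
    intro s hs
    rw [(hdβ s).deriv]
    rw [interior_Icc] at hs
    have := (hbound s (hIsub s (Ioo_subset_Icc_self hs))).2
    have := neg_lt_of_abs_lt this
    linarith
  have hβabs : ∀ s₁ ∈ I, ∀ s₂ ∈ I, |β s₂ - β s₁| ≤ 1/4 * |s₂ - s₁| := by
    intro s₁ h₁ s₂ h₂
    rcases le_total s₁ s₂ with h | h
    · rw [abs_of_nonneg (by linarith : (0:ℝ) ≤ s₂ - s₁), abs_le]
      exact ⟨by linarith [hβlb s₁ h₁ s₂ h₂ h], by linarith [hβub s₁ h₁ s₂ h₂ h]⟩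
    · rw [abs_of_nonpos (by linarith : s₂ - s₁ ≤ 0), abs_le]
      constructor
      · have := hβub s₂ h₂ s₁ h₁ h; linarith
      · have := hβlb s₂ h₂ s₁ h₁ h; linarith
  -- distance to the rest of the curve
  set K : Set Plane := γ '' Icc (s₀ + η) (s₀ + T - η) with hKdef
  have hKcomp : IsCompact K := isCompact_Icc.image hdiff.continuous
  have hKne : K.Nonempty := (Set.nonempty_Icc.mpr (by linarith)).image _
  have hyK : y ∉ K := by
    rintro ⟨w, ⟨hw1, hw2⟩, hwy⟩
    obtain ⟨k, hk⟩ := eq_mod_period hT hper hinj (hwy : γ w = y)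
    have h2 : (k : ℝ) * T ≤ -η := by linarith
    have h1 : (k : ℝ) * T ≥ η - T := by linarith
    have hkneg : k < 0 := by
      by_contra hc
      push_neg at hc
      have : (0:ℝ) ≤ (k:ℝ) * T := mul_nonneg (by exact_mod_cast hc) hT.le
      linarith
    have hk1 : (k : ℝ) ≤ -1 := by exact_mod_cast Int.le_sub_one_of_lt hkneg
    have : (k:ℝ) * T ≤ -1 * T := mul_le_mul_of_nonneg_right hk1 hT.le
    linarith
  have hd₀pos : 0 < infDist y K := (hKcomp.isClosed.notMem_iff_infDist_pos hKne).mp hyK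
  set d₀ : ℝ := infDist y K with hd₀def
  set σ : ℝ := min (η/2) (d₀/8) with hσdef
  have hσpos : 0 < σ := lt_min (by linarith) (by linarith)
  have hση : σ ≤ η/2 := min_le_left _ _
  have hσd : σ ≤ d₀/8 := min_le_right _ _
  set τ : ℝ := σ/2 with hτdef
  have hτpos : 0 < τ := by positivity
  set I' : Set ℝ := Icc (s₀ - σ) (s₀ + σ) with hI'def
  have hI'I : I' ⊆ I := Icc_subset_Icc (by linarith) (by linarith)
  -- the window exclusion lemma
  have hwin : ∀ s ∈ I', ∀ t : ℝ, t ≠ 0 → |t| ≤ τ → γ s + t • N ∉ Set.range γ := by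
    rintro s hs t ht htτ ⟨w, hw⟩
    have hsI : s ∈ I := hI'I hs
    have hss₀ : |s - s₀| ≤ σ := by
      rcases hs with ⟨h1, h2⟩; rw [abs_le]; constructor <;> linarith
    have hdisty : dist (γ s + t • N) y ≤ σ + τ := by
      calc dist (γ s + t • N) y ≤ dist (γ s + t • N) (γ s) + dist (γ s) y :=
            dist_triangle _ _ _
        _ ≤ |t| + |s - s₀| := by
            apply add_le_add
            · rw [dist_eq_norm]
              simp only [add_sub_cancel_left]
              rw [norm_smul, hN1, mul_one, Real.norm_eq_abs]
            · exact hdist s s₀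
        _ ≤ σ + τ := by have := add_le_add htτ hss₀; linarith
    obtain ⟨m, hm, hgm⟩ := hper.exists_mem_Ioc hT w (s₀ + η - T)
    have hm2 : m ≤ s₀ + η := by
      have := hm.2; linarith
    rcases le_or_gt m (s₀ - η) with hcase | hcase
    · -- the far part of the curve: distance at least d₀
      have hmem : γ m ∈ K := by
        refine ⟨m + T, ⟨by linarith [hm.1], by linarith⟩, ?_⟩
        exact hper m
      have : d₀ ≤ dist y (γ m) := infDist_le_dist_of_mem hmem
      rw [← hgm, hw] at this
      rw [dist_comm] at this
      have hτeq : τ = σ/2 := hτdef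
      linarith [hdisty, hσd, hd₀pos]
    · -- the near part: use the graph structure
      have hmI : m ∈ I := ⟨by linarith, hm2⟩
      have hαm : α m = α s := by
        have : γ m = γ s + t • N := by rw [← hgm, hw]
        simp only [hαdef, this]
        rw [show γ s + t • N - y = (γ s - y) + t • N by abel]
        rw [inner_add_left, real_inner_smul_left, hNT]
        ring
      have hms : m = s := by
        rcases lt_trichotomy m s with hlt | heq | hgt
        · have h2 := hαmono m hmI s hsI hlt.le
          rw [hαm] at h2
          linarith
        · exact heq
        · have h2 := hαmono s hsI m hmI hgt.le
          rw [hαm] at h2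
          linarith
      have : t • N = 0 := by
        have h0 : γ s + t • N = γ s := by rw [← hw, hgm, hms]
        have h1 := congrArg (fun x => x - γ s) h0
        simpa using h1
      have : |t| * ‖N‖ = 0 := by
        rw [← Real.norm_eq_abs, ← norm_smul, this, norm_zero]
      rw [hN1, mul_one] at this
      exact ht (abs_eq_zero.mp this)
  -- pick a point of U very close to y
  obtain ⟨u₀, hu₀U, hu₀d⟩ : ∃ u₀ ∈ U, dist (γ s₀) u₀ < σ/8 :=
    Metric.mem_closure_iff.mp hcl (σ/8) (by positivity)
  have hu₀Γ : u₀ ∉ Set.range γ := connectedComponentIn_subset _ _ hu₀U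
  have hu₀y : ‖u₀ - y‖ < σ/8 := by
    rw [← dist_eq_norm, dist_comm, hy]
    exact hu₀d
  -- decompose u₀ in the moving frame
  set a₀ : ℝ := ⟪u₀ - y, Tv⟫ with ha₀def
  have ha₀ : |a₀| ≤ σ/8 := by
    calc |a₀| ≤ ‖u₀ - y‖ * ‖Tv‖ := abs_real_inner_le_norm _ _
      _ ≤ σ/8 := by rw [hTv1, mul_one]; exact hu₀y.le
  have hsmem : s₀ - σ ∈ I := ⟨by linarith, by linarith⟩
  have hsmem' : s₀ + σ ∈ I := ⟨by linarith, by linarith⟩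
  have hs₀I : s₀ ∈ I := ⟨by linarith, by linarith⟩
  have hαplus : 3/4 * σ ≤ α (s₀ + σ) := by
    have := hαmono s₀ hs₀I (s₀ + σ) hsmem' (by linarith)
    rw [hα0] at this; linarith
  have hαminus : α (s₀ - σ) ≤ -(3/4) * σ := by
    have := hαmono (s₀ - σ) hsmem s₀ hs₀I (by linarith)
    rw [hα0] at this; linarith
  have hmem : a₀ ∈ Icc (α (s₀ - σ)) (α (s₀ + σ)) := by
    constructor
    · have := abs_le.mp ha₀; linarith [this.1]
    · have := abs_le.mp ha₀; linarith [(abs_le.mp ha₀).2]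
  obtain ⟨su, hsu, hαsu⟩ := intermediate_value_Icc (by linarith : s₀ - σ ≤ s₀ + σ)
    (hαcont.mono hI'I) hmem
  set tu : ℝ := ⟪u₀ - y, N⟫ - β su with htudef
  have hβsu : |β su| ≤ 1/4 * σ := by
    have hβs₀ : β s₀ = 0 := by simp [hβdef, hy]
    have := hβabs s₀ hs₀I su (hI'I hsu)
    rw [hβs₀, sub_zero] at this
    have habs : |su - s₀| ≤ σ := by
      rcases hsu with ⟨h1, h2⟩; rw [abs_le]; constructor <;> linarith
    calc |β su| ≤ 1/4 * |su - s₀| := this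
      _ ≤ 1/4 * σ := by linarith
  have htu_le : |tu| ≤ τ := by
    have h1 : |⟪u₀ - y, N⟫| ≤ σ/8 := by
      calc |⟪u₀ - y, N⟫| ≤ ‖u₀ - y‖ * ‖N‖ := abs_real_inner_le_norm _ _
        _ ≤ σ/8 := by rw [hN1, mul_one]; exact hu₀y.le
    calc |tu| ≤ |⟪u₀ - y, N⟫| + |β su| := abs_sub _ _
      _ ≤ σ/8 + 1/4 * σ := add_le_add h1 hβsu
      _ ≤ τ := by rw [hτdef]; linarith
  have hdecomp : u₀ = γ su + tu • N := by
    have hperp : ⟪u₀ - γ su, Tv⟫ = 0 := by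
      have : u₀ - γ su = (u₀ - y) - (γ su - y) := by abel
      rw [this, inner_sub_left, ← ha₀def]
      have : ⟪γ su - y, Tv⟫ = α su := rfl
      rw [this, hαsu]
      ring
    have heq := eq_inner_smul_rotp hTv1 hperp
    have hiN : ⟪u₀ - γ su, rotp Tv⟫ = tu := by
      have : u₀ - γ su = (u₀ - y) - (γ su - y) := by abel
      rw [← hNdef] at heq ⊢
      rw [this, inner_sub_left, htudef]
    rw [← hNdef] at heq
    rw [hiN] at heq
    have := eq_add_of_sub_eq heq
    rw [this]; abel
  have htu0 : tu ≠ 0 := by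
    intro h0
    apply hu₀Γ
    rw [hdecomp, h0, zero_smul, add_zero]
    exact ⟨su, rfl⟩
  set e : ℝ := if 0 < tu then 1 else -1 with hedef
  have habse : ∀ t : ℝ, |e * t| = |t| := by
    intro t
    rw [abs_mul, hedef]
    split <;> simp
  have hetu : e * |tu| = tu := by
    rw [hedef]
    rcases lt_trichotomy 0 tu with h | h | h
    · rw [if_pos h, one_mul, abs_of_pos h]
    · exact absurd h.symm htu0
    · rw [if_neg (by linarith), abs_of_neg h]; ring
  set S : Set Plane := (fun p : ℝ × ℝ => γ p.1 + (e * p.2) • N) '' (I' ×ˢ Ioc 0 τ)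
    with hSdef
  have hScon : IsPreconnected S := by
    apply (isPreconnected_Icc.prod isPreconnected_Ioc).image
    apply Continuous.continuousOn
    exact (hdiff.continuous.comp continuous_fst).add
      (((continuous_const.mul continuous_snd).smul continuous_const))
  have hSsub : S ⊆ (Set.range γ)ᶜ := by
    rintro x ⟨⟨s, t⟩, ⟨hsI', ht⟩, rfl⟩
    have ht0 : e * t ≠ 0 := by
      apply mul_ne_zero
      · rw [hedef]; split <;> norm_num
      · exact ne_of_gt ht.1
    have htle : |e * t| ≤ τ := by rw [habse, abs_of_pos ht.1]; exact ht.2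
    exact hwin s hsI' (e * t) ht0 htle
  have hu₀S : u₀ ∈ S := by
    refine ⟨(su, |tu|), ⟨hsu, abs_pos.mpr htu0, htu_le⟩, ?_⟩
    show γ su + (e * |tu|) • N = u₀
    rw [hetu]
    exact hdecomp.symm
  have hSU : S ⊆ U := by
    have h1 := hScon.subset_connectedComponentIn hu₀S hSsub
    have h2 : connectedComponentIn (Set.range γ)ᶜ z =
        connectedComponentIn (Set.range γ)ᶜ u₀ :=
      connectedComponentIn_eq (show u₀ ∈ connectedComponentIn (Set.range γ)ᶜ z from hu₀U)
    rw [hU, h2]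
    exact h1
  refine ⟨σ, hσpos, fun s hs => ?_⟩
  rw [Metric.mem_closure_iff]
  intro ε' hε'
  set t' : ℝ := min τ (ε'/2) with ht'def
  have ht'pos : 0 < t' := lt_min hτpos (by linarith)
  refine ⟨γ s + (e * t') • N, hSU ⟨(s, t'), ⟨?_, ⟨ht'pos, min_le_left _ _⟩⟩, rfl⟩, ?_⟩
  · rw [hI'def]
    rcases abs_le.mp hs with ⟨h1, h2⟩
    exact ⟨by linarith, by linarith⟩
  · rw [dist_comm, dist_eq_norm]
    simp only [add_sub_cancel_left]
    rw [norm_smul, hN1, mul_one, Real.norm_eq_abs, habse, abs_of_pos ht'pos]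
    calc t' ≤ ε'/2 := min_le_right _ _
      _ < ε' := by linarith

theorem exists_unbounded_component (hT : 0 < T) (hper : Function.Periodic γ T)
    (hinj : Set.InjOn γ (Set.Ico 0 T)) (hsm : ContDiff ℝ 2 γ)
    (hus : ∀ s, ‖deriv γ s‖ = 1) :
    ∃ z : Plane, z ∉ Set.range γ ∧
      ¬ Bornology.IsBounded (connectedComponentIn (Set.range γ)ᶜ z) ∧
      ∀ s : ℝ, γ s ∈ closure (connectedComponentIn (Set.range γ)ᶜ z) := by
  have hdiff : Differentiable ℝ γ := hsm.differentiable (by norm_num)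
  have hΓc : IsCompact (Set.range γ) := by
    rw [← hper.image_Icc hT 0]
    exact isCompact_Icc.image hdiff.continuous
  obtain ⟨R₀, hR₀⟩ := hΓc.isBounded.subset_closedBall 0
  set R : ℝ := |R₀| + 1 with hRdef
  have hRR₀ : R₀ < R := by
    calc R₀ ≤ |R₀| := le_abs_self _
      _ < R := by rw [hRdef]; linarith
  set ray : Set Plane := (fun t : ℝ => EuclideanSpace.single (0 : Fin 2) t) '' Ici R
    with hraydef
  have hraysub : ray ⊆ (Set.range γ)ᶜ := by
    rintro x ⟨t, ht, rfl⟩ hx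
    have := hR₀ hx
    rw [Metric.mem_closedBall, dist_zero_right, EuclideanSpace.norm_single,
      Real.norm_eq_abs] at this
    have ht' : R ≤ t := ht
    have h0 : (0:ℝ) ≤ t := le_trans (by positivity) ht'
    rw [abs_of_nonneg h0] at this
    linarith
  set z : Plane := EuclideanSpace.single (0 : Fin 2) R with hzdef
  have hzray : z ∈ ray := ⟨R, Set.self_mem_Ici, rfl⟩
  set U : Set Plane := connectedComponentIn (Set.range γ)ᶜ z with hUdef
  have hzU : z ∈ U := mem_connectedComponentIn (hraysub hzray)
  have hrayU : ray ⊆ U := by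
    apply IsPreconnected.subset_connectedComponentIn _ hzray hraysub
    have hc : Continuous fun t : ℝ => EuclideanSpace.single (0 : Fin 2) t := by
      apply LipschitzWith.continuous (K := 1)
      apply LipschitzWith.of_dist_le_mul
      intro a b
      rw [EuclideanSpace.dist_single_same, NNReal.coe_one, one_mul]
    exact (isPreconnected_Ici).image _ hc.continuousOn
  have hunb : ¬ Bornology.IsBounded U := by
    intro hb
    obtain ⟨M, hM⟩ := hb.subset_closedBall 0
    have hmem : EuclideanSpace.single (0 : Fin 2) (max R (|M| + 1)) ∈ U :=
      hrayU ⟨max R (|M| + 1), Set.mem_Ici.mpr (le_max_left _ _), rfl⟩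
    have := hM hmem
    rw [Metric.mem_closedBall, dist_zero_right, EuclideanSpace.norm_single,
      Real.norm_eq_abs] at this
    have h1 : |M| + 1 ≤ max R (|M| + 1) := le_max_right _ _
    have h2 : (0:ℝ) ≤ max R (|M| + 1) := le_trans (by positivity) h1
    rw [abs_of_nonneg h2] at this
    have : M ≤ |M| := le_abs_self M
    linarith
  -- the set of parameters whose image is in the closure of U is clopen and nonempty
  set Z : Set ℝ := {s | γ s ∈ closure U} with hZdef
  have hZclosed : IsClosed Z := IsClosed.preimage hdiff.continuous isClosed_closure
  have hZopen : IsOpen Z := by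
    rw [Metric.isOpen_iff]
    intro s₀ hs₀
    obtain ⟨σ, hσ, hσsub⟩ := closure_window hT hper hinj hsm hus hs₀
    exact ⟨σ, hσ, fun s hs => hσsub s
      (le_of_lt (by rw [← Real.dist_eq]; exact Metric.mem_ball.mp hs))⟩
  have hZne : Z.Nonempty := by
    have hUopen : IsOpen U := hΓc.isClosed.isOpen_compl.connectedComponentIn
    have hfrsub : frontier U ⊆ Set.range γ := by
      intro x hx
      by_contra hxΓ
      have hxU : x ∉ U := by
        rw [hUopen.frontier_eq] at hx
        exact hx.2
      apply hxU
      have hWopen : IsOpen (connectedComponentIn (Set.range γ)ᶜ x) :=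
        hΓc.isClosed.isOpen_compl.connectedComponentIn
      have hxW : x ∈ connectedComponentIn (Set.range γ)ᶜ x :=
        mem_connectedComponentIn hxΓ
      obtain ⟨w, hwW, hwU⟩ := _root_.mem_closure_iff.mp (frontier_subset_closure hx) _ hWopen hxW
      have h2 : connectedComponentIn (Set.range γ)ᶜ x =
          connectedComponentIn (Set.range γ)ᶜ w := connectedComponentIn_eq hwW
      have h3 : connectedComponentIn (Set.range γ)ᶜ z =
          connectedComponentIn (Set.range γ)ᶜ w := connectedComponentIn_eq hwU
      rw [hUdef, h3, ← h2]
      exact hxW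
    have hfrne : (frontier U).Nonempty := by
      rw [Set.nonempty_iff_ne_empty]
      intro hfr
      have : U = univ := by
        rcases frontier_eq_empty_iff.mp hfr with h | h
        · exact absurd (h ▸ hzU) (Set.notMem_empty z)
        · exact h
      have : γ 0 ∈ U := this ▸ Set.mem_univ _
      exact (connectedComponentIn_subset _ _ this) ⟨0, rfl⟩
    obtain ⟨x, hx⟩ := hfrne
    obtain ⟨s₁, hs₁⟩ := hfrsub hx
    exact ⟨s₁, by rw [hZdef]; exact Set.mem_setOf.mpr (hs₁ ▸ (frontier_subset_closure hx))⟩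
  have hZuniv : Z = univ := IsClopen.eq_univ ⟨hZclosed, hZopen⟩ hZne
  refine ⟨z, hraysub hzray, hunb, fun s => ?_⟩
  have : s ∈ Z := hZuniv ▸ Set.mem_univ s
  exact this

/-- Let `γ` be a simple closed plane curve of class C², `p = γ a` and
`q = γ b` two distinct points on it, and suppose the incircle `C_p` of `γ` at `p` also
passes through `q`.  If the radius `r` of `C_p` is strictly less than the radius of
curvature `1/‖γ''‖` at every point of the arc `γ '' [a, b]` (expressed as
`r * ‖γ'' s‖ < 1`, so the condition holds trivially where `γ'' s = 0`), then the arc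
contains points outside the closed disk bounded by `C_p`. -/
theorem arc_leaves_incircle_of_radius_lt_curvature_radius
    (c : SimpleClosedCurveC2) (center : Plane) (r : ℝ)
    (a b : ℝ) (hab : a < b) (hperiod : b - a < c.period)
    (hpq : c.toFun a ≠ c.toFun b)
    (hinc : c.IsIncircleAt (c.toFun a) center r)
    (hq : c.toFun b ∈ Metric.sphere center r)
    (hrad : ∀ s ∈ Set.Icc a b, r * ‖deriv (deriv c.toFun) s‖ < 1) :
    ∃ s ∈ Set.Icc a b, c.toFun s ∉ Metric.closedBall center r := by
  by_contra hcon
  push_neg at hcon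
  set γ : ℝ → Plane := c.toFun with hγdef
  have hr : 0 < r := hinc.1
  have hreg : Metric.closedBall center r ⊆ c.region := hinc.2.2.1
  have hdiff : Differentiable ℝ γ := c.contDiff.differentiable (by norm_num)
  have hd1 : ∀ s, HasDerivAt γ (deriv γ s) s := fun s => (hdiff s).hasDerivAt
  have hdiff2 : Differentiable ℝ (deriv γ) := by
    have h := (contDiff_succ_iff_deriv (n := 1)).mp (by norm_num at *; exact c.contDiff)
    exact h.2.2.differentiable (by norm_num)
  have hd2 : ∀ s, HasDerivAt (deriv γ) (deriv (deriv γ) s) s :=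
    fun s => (hdiff2 s).hasDerivAt
  by_cases hstrict : ∃ s₀ ∈ Ioo a b, dist (γ s₀) center < r
  · -- a point of the arc strictly inside the disk: topological contradiction
    obtain ⟨s₀, hs₀, hlt⟩ := hstrict
    obtain ⟨z, hzΓ, hzunb, hzcl⟩ := exists_unbounded_component c.period_pos c.periodic
      c.injOn c.contDiff c.unitSpeed
    obtain ⟨u, huU, hud⟩ := Metric.mem_closure_iff.mp (hzcl s₀) (r - dist (γ s₀) center)
      (by linarith)
    have huball : u ∈ Metric.closedBall center r := by
      rw [Metric.mem_closedBall]
      calc dist u center ≤ dist u (γ s₀) + dist (γ s₀) center := dist_triangle _ _ _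
        _ ≤ r := by rw [dist_comm] at hud; linarith
    have huΓ : u ∉ Set.range γ := connectedComponentIn_subset _ _ huU
    rcases hreg huball with hu1 | hu2
    · exact huΓ hu1
    · apply hzunb
      have h2 : connectedComponentIn (Set.range γ)ᶜ z =
          connectedComponentIn (Set.range γ)ᶜ u := connectedComponentIn_eq huU
      rw [h2]
      exact hu2.2
  · -- the whole open arc lies on the circle: curvature contradiction
    push_neg at hstrict
    have honcirc : ∀ s ∈ Ioo a b, dist (γ s) center = r := fun s hs =>
      le_antisymm (Metric.mem_closedBall.mp (hcon s (Ioo_subset_Icc_self hs)))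
        (hstrict s hs)
    set F : ℝ → ℝ := fun s => ⟪γ s - center, γ s - center⟫ with hFdef
    set G : ℝ → ℝ := fun s => ⟪γ s - center, deriv γ s⟫ with hGdef
    have hFd : ∀ s, HasDerivAt F (2 * G s) s := by
      intro s
      have h := HasDerivAt.inner ℝ ((hd1 s).sub_const center) ((hd1 s).sub_const center)
      refine h.congr_deriv ?_
      simp only [hGdef]
      rw [real_inner_comm (deriv γ s) (γ s - center)]
      ring
    have hGd : ∀ s, HasDerivAt G
        (⟪γ s - center, deriv (deriv γ) s⟫ + ⟪deriv γ s, deriv γ s⟫) s := by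
      intro s
      have h := HasDerivAt.inner ℝ ((hd1 s).sub_const center) (hd2 s)
      exact h
    have hFconst : ∀ s ∈ Ioo a b, F s = r * r := by
      intro s hs
      have := honcirc s hs
      rw [dist_eq_norm] at this
      rw [hFdef]
      simp only []
      rw [real_inner_self_eq_norm_sq, this]
      ring
    have hG0 : ∀ s ∈ Ioo a b, G s = 0 := by
      intro s hs
      have hev : F =ᶠ[nhds s] fun _ => r * r := by
        filter_upwards [isOpen_Ioo.mem_nhds hs] with w hw
        exact hFconst w hw
      have h1 : deriv F s = 0 := by
        rw [Filter.EventuallyEq.deriv_eq hev]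
        simp
      have h2 : deriv F s = 2 * G s := (hFd s).deriv
      linarith [h1 ▸ h2]
    set s₁ : ℝ := (a + b) / 2 with hs₁def
    have hs₁ : s₁ ∈ Ioo a b := ⟨by rw [hs₁def]; linarith, by rw [hs₁def]; linarith⟩
    have hev : G =ᶠ[nhds s₁] fun _ => 0 := by
      filter_upwards [isOpen_Ioo.mem_nhds hs₁] with w hw
      exact hG0 w hw
    have h1 : deriv G s₁ = 0 := by
      rw [Filter.EventuallyEq.deriv_eq hev]
      simp
    have h2 : deriv G s₁ = ⟪γ s₁ - center, deriv (deriv γ) s₁⟫ + 1 := by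
      rw [(hGd s₁).deriv, real_inner_self_eq_norm_sq, c.unitSpeed s₁]
      norm_num
    have h3 : ⟪γ s₁ - center, deriv (deriv γ) s₁⟫ = -1 := by linarith [h1 ▸ h2]
    have h4 : |⟪γ s₁ - center, deriv (deriv γ) s₁⟫| ≤ r * ‖deriv (deriv γ) s₁‖ := by
      calc |⟪γ s₁ - center, deriv (deriv γ) s₁⟫|
          ≤ ‖γ s₁ - center‖ * ‖deriv (deriv γ) s₁‖ := abs_real_inner_le_norm _ _
        _ ≤ r * ‖deriv (deriv γ) s₁‖ := by
            apply mul_le_mul_of_nonneg_right _ (norm_nonneg _)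
            rw [← dist_eq_norm]
            exact le_of_eq (honcirc s₁ hs₁)
    have h5 := hrad s₁ (Ioo_subset_Icc_self hs₁)
    rw [h3] at h4
    rw [abs_neg, abs_one] at h4
    linarith
end
end

section
/- For every ε > 0 there exists a simple closed plane curve γ with curvature at most 1 at every point, with length greater than 4π − ε, such that no two disjoint open disks of radius 1 are both contained in the inside (the bounded complementary component) of γ. (Such curves are obtained from three unit circles centered at the vertices of an equilateral triangle of side length 2 − l, joined by outer unit-circle arcs, with l > 0 small; their lengths tend to 4π as l → 0.) -/
/-!
Common definitions: a simple closed plane curve of class C¹, piecewise C²,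
arclength-parametrized with period equal to its length; its inside.
-/

open Metric Set

noncomputable section

/-- A simple closed plane curve of class C¹, piecewise C²: an injective (per period),
arclength-parametrized, C¹ periodic map `ℝ → ℝ²` whose derivative fails to be
differentiable at only finitely many points of a period.  Since the parametrization is by
arclength, the period is the length of the curve. -/
structure PiecewiseC2ClosedCurve where
  toFun : ℝ → Plane
  period : ℝ
  period_pos : 0 < period
  periodic : Function.Periodic toFun period
  injOn : Set.InjOn toFun (Set.Ico 0 period)
  contDiff : ContDiff ℝ 1 toFun
  unitSpeed : ∀ s : ℝ, ‖deriv toFun s‖ = 1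
  piecewiseC2 : {s ∈ Set.Ico (0 : ℝ) period | ¬ DifferentiableAt ℝ (deriv toFun) s}.Finite

namespace PiecewiseC2ClosedCurve

/-- The image (trace) of the curve. -/
def image (c : PiecewiseC2ClosedCurve) : Set Plane := Set.range c.toFun

/-- The length of the curve: the period of its arclength parametrization. -/
def length (c : PiecewiseC2ClosedCurve) : ℝ := c.period

/-- The inside of the curve: the union of the bounded connected components of the
complement of the image (by the Jordan curve theorem there is exactly one). -/
def inside (c : PiecewiseC2ClosedCurve) : Set Plane :=
  {x | x ∉ c.image ∧ Bornology.IsBounded (connectedComponentIn c.imageᶜ x)}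

/-- The curvature of the curve is at most `1` wherever it is defined. -/
def CurvatureLEOne (c : PiecewiseC2ClosedCurve) : Prop :=
  ∀ s : ℝ, DifferentiableAt ℝ (deriv c.toFun) s → ‖deriv (deriv c.toFun) s‖ ≤ 1

end PiecewiseC2ClosedCurve

namespace CCAux

/-- Identify `ℂ` with the Euclidean plane. -/
def L : ℂ ≃ₗᵢ[ℝ] Plane := Complex.orthonormalBasisOneI.repr

/-- Arclength parametrization of the circle of radius `r` centered at the origin of `ℂ`. -/
def g (r s : ℝ) : ℂ := r * Complex.exp (s * Complex.I / r)

lemma hasDerivAt_g (r : ℝ) (hr : r ≠ 0) (s : ℝ) :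
    HasDerivAt (g r) (Complex.I * Complex.exp (s * Complex.I / r)) s := by
  have h0 := ((((hasDerivAt_id ((s:ℝ):ℂ)).mul_const Complex.I).div_const r).cexp).const_mul
    ((r:ℝ):ℂ)
  have h2 := h0.comp_ofReal
  have hr' : ((r:ℝ) : ℂ) ≠ 0 := Complex.ofReal_ne_zero.2 hr
  convert h2 using 1
  · funext y; simp only [g, id]
  · simp only [id, one_mul]
    field_simp

lemma hasDerivAt_g' (r : ℝ) (s : ℝ) :
    HasDerivAt (fun s : ℝ => Complex.I * Complex.exp (s * Complex.I / r))
      (Complex.I * (Complex.exp (s * Complex.I / r) * (Complex.I / r))) s := by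
  have h0 := ((((hasDerivAt_id ((s:ℝ):ℂ)).mul_const Complex.I).div_const r).cexp).const_mul
    Complex.I
  have h2 := h0.comp_ofReal
  convert h2 using 1
  all_goals simp only [id, one_mul]

lemma norm_exp_aux (r s : ℝ) : ‖Complex.exp ((s : ℂ) * Complex.I / r)‖ = 1 := by
  have h : ((s : ℂ) * Complex.I / r) = ((s / r : ℝ) : ℂ) * Complex.I := by
    push_cast; ring
  rw [h, Complex.norm_exp_ofReal_mul_I]

lemma g_periodic (r : ℝ) (hr : r ≠ 0) : Function.Periodic (g r) (2 * Real.pi * r) := by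
  intro s
  have h : (((s + 2 * Real.pi * r : ℝ) : ℂ) * Complex.I / r)
      = (s : ℂ) * Complex.I / r + 2 * Real.pi * Complex.I := by
    have hr' : ((r:ℝ) : ℂ) ≠ 0 := Complex.ofReal_ne_zero.2 hr
    push_cast
    field_simp
  simp only [g, h, Complex.exp_add, Complex.exp_two_pi_mul_I, mul_one]

lemma g_inj (r : ℝ) (hr : 0 < r) : Set.InjOn (g r) (Set.Ico 0 (2 * Real.pi * r)) := by
  intro s hs t ht h
  have hr' : ((r:ℝ) : ℂ) ≠ 0 := Complex.ofReal_ne_zero.2 hr.ne'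
  have hexp : Complex.exp ((s : ℂ) * Complex.I / r) = Complex.exp ((t : ℂ) * Complex.I / r) :=
    mul_left_cancel₀ hr' h
  obtain ⟨n, hn⟩ := Complex.exp_eq_exp_iff_exists_int.1 hexp
  field_simp at hn
  have hn2 : (s : ℂ) * Complex.I = ((t + n * (2 * Real.pi * r) : ℝ) : ℂ) * Complex.I := by
    push_cast
    linear_combination hn * Complex.I
  have hn3 : s = t + n * (2 * Real.pi * r) := by
    have := mul_right_cancel₀ Complex.I_ne_zero hn2
    exact_mod_cast this
  have hP : 0 < 2 * Real.pi * r := by positivity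
  have h1 : -1 < (n : ℝ) := by nlinarith [hs.1, hs.2, ht.1, ht.2]
  have h2 : (n : ℝ) < 1 := by nlinarith [hs.1, hs.2, ht.1, ht.2]
  have h1' : (-1 : ℤ) < n := by exact_mod_cast h1
  have h2' : n < 1 := by exact_mod_cast h2
  have hn0 : n = 0 := by omega
  rw [hn0] at hn3
  simpa using hn3

lemma g_range (r : ℝ) (hr : 0 < r) : Set.range (g r) = Metric.sphere (0 : ℂ) r := by
  apply Set.eq_of_subset_of_subset
  · rintro _ ⟨s, rfl⟩
    simp only [mem_sphere_zero_iff_norm, g, norm_mul, norm_exp_aux, Complex.norm_real,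
      Real.norm_eq_abs, abs_of_pos hr, mul_one]
  · intro z hz
    rw [mem_sphere_zero_iff_norm] at hz
    refine ⟨r * Complex.arg z, ?_⟩
    have hr' : ((r:ℝ) : ℂ) ≠ 0 := Complex.ofReal_ne_zero.2 hr.ne'
    have h : (((r * Complex.arg z : ℝ) : ℂ) * Complex.I / r)
        = (Complex.arg z : ℂ) * Complex.I := by
      push_cast; field_simp
    rw [g, h]
    have habs : ‖z‖ = r := by rw [hz]
    rw [← habs]
    exact Complex.norm_mul_exp_arg_mul_I z

/-- The curve as a map into the plane. -/
def f (r s : ℝ) : Plane := L (g r s)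

lemma hasDerivAt_f (r : ℝ) (hr : r ≠ 0) (s : ℝ) :
    HasDerivAt (f r) (L (Complex.I * Complex.exp (s * Complex.I / r))) s :=
  (L.toLinearIsometry.toContinuousLinearMap.hasFDerivAt).comp_hasDerivAt s (hasDerivAt_g r hr s)

lemma deriv_f (r : ℝ) (hr : r ≠ 0) :
    deriv (f r) = fun s : ℝ => L (Complex.I * Complex.exp (s * Complex.I / r)) :=
  funext fun s => (hasDerivAt_f r hr s).deriv

lemma hasDerivAt_f' (r : ℝ) (hr : r ≠ 0) (s : ℝ) :
    HasDerivAt (deriv (f r))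
      (L (Complex.I * (Complex.exp (s * Complex.I / r) * (Complex.I / r)))) s := by
  rw [deriv_f r hr]
  exact (L.toLinearIsometry.toContinuousLinearMap.hasFDerivAt).comp_hasDerivAt s
    (hasDerivAt_g' r s)

lemma range_f (r : ℝ) (hr : 0 < r) : Set.range (f r) = Metric.sphere (0 : Plane) r := by
  have : Set.range (f r) = L '' Set.range (g r) := (Set.range_comp _ _)
  rw [this, g_range r hr, L.image_sphere, map_zero]

end CCAux

open CCAux in
/-- The circle of radius `r` as a `PiecewiseC2ClosedCurve`. -/
def circleCurve (r : ℝ) (hr : 0 < r) : PiecewiseC2ClosedCurve where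
  toFun := f r
  period := 2 * Real.pi * r
  period_pos := by positivity
  periodic := fun s => congrArg L (g_periodic r hr.ne' s)
  injOn := fun s hs t ht h => g_inj r hr hs ht (L.injective h)
  contDiff := by
    rw [contDiff_one_iff_deriv]
    refine ⟨fun s => (hasDerivAt_f r hr.ne' s).differentiableAt, ?_⟩
    rw [deriv_f r hr.ne']
    exact L.continuous.comp (continuous_const.mul (Complex.continuous_exp.comp
      ((Complex.continuous_ofReal.mul continuous_const).div_const _)))
  unitSpeed := by
    intro s
    rw [(hasDerivAt_f r hr.ne' s).deriv, L.norm_map, norm_mul, norm_exp_aux,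
      Complex.norm_I, one_mul]
  piecewiseC2 := by
    apply Set.Finite.subset Set.finite_empty
    intro s hs
    exact (hs.2 (hasDerivAt_f' r hr.ne' s).differentiableAt).elim

open CCAux in
lemma norm_lt_of_mem_inside (r : ℝ) (hr : 0 < r) {x : Plane}
    (hx : x ∈ (circleCurve r hr).inside) : ‖x‖ < r := by
  obtain ⟨hx1, hx2⟩ := hx
  have himg : (circleCurve r hr).image = Metric.sphere (0 : Plane) r := range_f r hr
  rw [himg, mem_sphere_zero_iff_norm] at hx1
  by_contra hle
  have hgt : r < ‖x‖ := lt_of_le_of_ne (not_lt.1 hle) (Ne.symm hx1)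
  have hxpos : 0 < ‖x‖ := lt_trans hr hgt
  set S := (fun t : ℝ => t • x) '' Set.Ici 1 with hS
  have hS1 : IsPreconnected S :=
    isPreconnected_Ici.image _ (continuous_id.smul continuous_const).continuousOn
  have hSsub : S ⊆ (circleCurve r hr).imageᶜ := by
    rintro _ ⟨t, ht, rfl⟩
    rw [himg]
    simp only [mem_compl_iff, mem_sphere_zero_iff_norm, norm_smul, Real.norm_eq_abs]
    have ht1 : (1:ℝ) ≤ t := ht
    rw [abs_of_pos (by linarith)]
    intro hEq
    nlinarith
  have hxS : x ∈ S := ⟨1, Set.mem_Ici.2 le_rfl, one_smul ℝ x⟩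
  have hsub := hS1.subset_connectedComponentIn hxS hSsub
  obtain ⟨M, hM⟩ := isBounded_iff_forall_norm_le.1 hx2
  set t := max 1 ((M + 1) / ‖x‖) with htdef
  have htS : t • x ∈ S := ⟨t, Set.mem_Ici.2 (le_max_left _ _), rfl⟩
  have hle2 := hM _ (hsub htS)
  rw [norm_smul, Real.norm_eq_abs] at hle2
  have ht1 : (1:ℝ) ≤ t := le_max_left _ _
  rw [abs_of_pos (by linarith)] at hle2
  have h1 : (M + 1) / ‖x‖ ≤ t := le_max_right _ _
  have key : (M + 1) / ‖x‖ * ‖x‖ = M + 1 := div_mul_cancel₀ _ hxpos.ne'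
  nlinarith


/-- For every `ε > 0` there is a simple closed plane curve (C¹, piecewise
C²) with curvature at most `1` everywhere it is defined and length greater than `4π - ε`,
such that no two disjoint open disks of radius `1` are both contained in its inside. -/
theorem exists_curve_length_near_four_pi_without_two_disjoint_unit_disks :
    ∀ ε : ℝ, 0 < ε → ∃ c : PiecewiseC2ClosedCurve, c.CurvatureLEOne ∧
      4 * Real.pi - ε < c.length ∧
      ¬ ∃ x y : Plane, Disjoint (Metric.ball x 1) (Metric.ball y 1) ∧
        Metric.ball x 1 ⊆ c.inside ∧ Metric.ball y 1 ⊆ c.inside := by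
  intro ε hε
  have hπ : 0 < Real.pi := Real.pi_pos
  set δ : ℝ := min (ε / (4 * Real.pi)) (1 / 2) with hδdef
  have hδ0 : 0 < δ := lt_min (by positivity) (by norm_num)
  have hδ1 : δ ≤ 1 / 2 := min_le_right _ _
  have hδε : 2 * Real.pi * δ < ε := by
    have h1 : δ ≤ ε / (4 * Real.pi) := min_le_left _ _
    have h2 : 2 * Real.pi * δ ≤ 2 * Real.pi * (ε / (4 * Real.pi)) := by nlinarith
    have h3 : 2 * Real.pi * (ε / (4 * Real.pi)) = ε / 2 := by field_simp; ring
    linarith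
  set r : ℝ := 2 - δ with hrdef
  have hr0 : 0 < r := by simp only [hrdef]; linarith
  have hr1 : 1 ≤ r := by simp only [hrdef]; linarith
  have hr2 : r < 2 := by simp only [hrdef]; linarith
  refine ⟨circleCurve r hr0, ?_, ?_, ?_⟩
  · intro s _
    show ‖deriv (deriv (CCAux.f r)) s‖ ≤ 1
    rw [(CCAux.hasDerivAt_f' r hr0.ne' s).deriv, CCAux.L.norm_map]
    simp only [norm_mul, norm_div, Complex.norm_I,
      Complex.norm_real, Real.norm_eq_abs, abs_of_pos hr0, one_mul, mul_one]
    have he : ‖Complex.exp ((s:ℂ) * Complex.I / r)‖ = 1 := by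
      exact CCAux.norm_exp_aux r s
    rw [he, one_mul, div_le_one hr0]
    exact hr1
  · show 4 * Real.pi - ε < 2 * Real.pi * r
    simp only [hrdef]
    nlinarith
  · rintro ⟨x, y, hdisj, hx, hy⟩
    set t0 : ℝ := 1 - δ / 2 with ht0def
    have ht00 : 0 < t0 := by simp only [ht0def]; linarith
    have ht01 : t0 < 1 := by simp only [ht0def]; linarith
    have key : ∀ z : Plane, Metric.ball z 1 ⊆ (circleCurve r hr0).inside → ‖z‖ < r - t0 := by
      intro z hz
      by_cases hz0 : z = 0
      · rw [hz0, norm_zero]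
        simp only [hrdef, ht0def]
        linarith
      · have hznorm : 0 < ‖z‖ := norm_pos_iff.2 hz0
        set w : Plane := z + (t0 * ‖z‖⁻¹) • z with hwdef
        have hw1 : w ∈ Metric.ball z 1 := by
          rw [Metric.mem_ball, dist_eq_norm, hwdef]
          have : z + (t0 * ‖z‖⁻¹) • z - z = (t0 * ‖z‖⁻¹) • z := by abel
          rw [this, norm_smul, Real.norm_eq_abs, abs_of_pos (by positivity)]
          rw [mul_assoc, inv_mul_cancel₀ hznorm.ne', mul_one]
          exact ht01
        have hw2 : ‖w‖ < r := norm_lt_of_mem_inside r hr0 (hz hw1)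
        have hw3 : ‖w‖ = ‖z‖ + t0 := by
          rw [hwdef]
          have : z + (t0 * ‖z‖⁻¹) • z = (1 + t0 * ‖z‖⁻¹) • z := by
            rw [add_smul, one_smul]
          rw [this, norm_smul, Real.norm_eq_abs, abs_of_pos (by positivity)]
          field_simp
        linarith [hw3 ▸ hw2]
    have hxn := key x hx
    have hyn := key y hy
    have hrt : r - t0 = 1 - δ / 2 := by simp only [hrdef, ht0def]; ring
    have hdist : dist x y < 2 := by
      rw [dist_eq_norm]
      calc ‖x - y‖ ≤ ‖x‖ + ‖y‖ := norm_sub_le x y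
        _ < 2 := by rw [hrt] at hxn hyn; linarith
    set m : Plane := midpoint ℝ x y with hmdef
    have hm1 : m ∈ Metric.ball x 1 := by
      rw [Metric.mem_ball, hmdef, dist_midpoint_left]
      rw [Real.norm_two]
      linarith
    have hm2 : m ∈ Metric.ball y 1 := by
      rw [Metric.mem_ball, hmdef, dist_midpoint_right]
      rw [Real.norm_two]
      linarith
    exact Set.disjoint_left.1 hdisj hm1 hm2
end
end
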